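/- Let Q(x5,x6,x7) = Σ_{5≤i≤j≤7} q_{ij} x_i x_j and Q'(x1,x2,x3) = Σ_{1≤i≤j≤3} q'_{ij} x_i x_j be quadratic forms over ℂ. The only homogeneous polynomials of degree 2 in x1,...,x7 that lie both in the square of the ideal (x1,x2,x3,x4,Q) and in the square of the ideal (x4,x5,x6,x7,Q') are the scalar multiples of x4². -/

import Mathlib

/- STATEMENT 2: In ℂ[x1,…,x7], the only homogeneous polynomials of degree 2 lying
both in the square of the ideal (x1,x2,x3,x4,Q(x5,x6,x7)) of the conic C and in the
square of the ideal (x4,x5,x6,x7,Q'(x1,x2,x3)) of the conic C' are the scalar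
multiples of x4². Variables x1,…,x7 ↔ indices 0,…,6 of Fin 7 (so x4 is X 3). -/

open MvPolynomial

noncomputable def Qpoly (q : Fin 3 → Fin 3 → ℂ) : MvPolynomial (Fin 7) ℂ :=
  ∑ i : Fin 3, ∑ j : Fin 3,
    C (q i j) * X (⟨i.1 + 4, by omega⟩ : Fin 7) * X (⟨j.1 + 4, by omega⟩ : Fin 7)

noncomputable def Q'poly (q' : Fin 3 → Fin 3 → ℂ) : MvPolynomial (Fin 7) ℂ :=
  ∑ i : Fin 3, ∑ j : Fin 3,
    C (q' i j) * X (⟨i.1, by omega⟩ : Fin 7) * X (⟨j.1, by omega⟩ : Fin 7)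

namespace DegTwoAux

abbrev Mv := MvPolynomial (Fin 7) ℂ

/-- total degree of an exponent vector, as a sum over all of `Fin 7` -/
def sd (d : Fin 7 →₀ ℕ) : ℕ := ∑ i : Fin 7, d i

lemma sd_eq (d : Fin 7 →₀ ℕ) : sd d = d.degree := by
  refine (Finset.sum_subset (Finset.subset_univ _) ?_).symm
  intro x _ hx
  exact Finsupp.notMem_support_iff.mp hx

lemma sd_add (a b : Fin 7 →₀ ℕ) : sd (a + b) = sd a + sd b := by
  simp [sd, Finset.sum_add_distrib]

lemma hom_sd {F : Mv} {n : ℕ} (h : F.IsHomogeneous n) {d : Fin 7 →₀ ℕ}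
    (hd : MvPolynomial.coeff d F ≠ 0) : sd d = n := by
  have := h hd
  rw [Pi.one_def, ← Finsupp.degree_eq_weight_one (R := ℕ)] at this
  rw [sd_eq, this]

lemma coeff_mul_split {p q : Mv} {d : Fin 7 →₀ ℕ}
    (h : MvPolynomial.coeff d (p * q) ≠ 0) :
    ∃ d1 d2, d = d1 + d2 ∧ MvPolynomial.coeff d1 p ≠ 0 ∧ MvPolynomial.coeff d2 q ≠ 0 := by
  rw [MvPolynomial.coeff_mul] at h
  obtain ⟨x, hx, hne⟩ := Finset.exists_ne_zero_of_sum_ne_zero h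
  refine ⟨x.1, x.2, (Finset.HasAntidiagonal.mem_antidiagonal.mp hx).symm, ?_, ?_⟩
  · exact left_ne_zero_of_mul hne
  · exact right_ne_zero_of_mul hne

/-- "every monomial has degree ≥ 3 or weight ≥ 2" -/
def GoodP (w : (Fin 7 →₀ ℕ) → ℕ) (F : Mv) : Prop :=
  ∀ d, MvPolynomial.coeff d F ≠ 0 → 3 ≤ sd d ∨ 2 ≤ w d

/-- "every monomial has degree ≥ 2 or weight ≥ 1" -/
def Good1 (w : (Fin 7 →₀ ℕ) → ℕ) (F : Mv) : Prop :=
  ∀ d, MvPolynomial.coeff d F ≠ 0 → 2 ≤ sd d ∨ 1 ≤ w d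

lemma good1_span (w : (Fin 7 →₀ ℕ) → ℕ)
    (hadd : ∀ a b, w (a + b) = w a + w b)
    (S : Set Mv) (hS : ∀ g ∈ S, Good1 w g) :
    ∀ m ∈ Ideal.span S, Good1 w m := by
  intro m hm
  refine Submodule.span_induction hS ?_ ?_ ?_ hm
  · intro d hd
    simp at hd
  · intro x y hx hy px py d hd
    rw [MvPolynomial.coeff_add] at hd
    rcases (by by_contra hc; push_neg at hc; simp [hc.1, hc.2] at hd :
        MvPolynomial.coeff d x ≠ 0 ∨ MvPolynomial.coeff d y ≠ 0) with h | h
    · exact px d h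
    · exact py d h
  · intro a x hx px d hd
    rw [smul_eq_mul] at hd
    obtain ⟨d1, d2, rfl, _, h2⟩ := coeff_mul_split hd
    rcases px d2 h2 with h | h
    · left
      rw [sd_add]; omega
    · right
      rw [hadd]; omega

lemma goodP_sq (w : (Fin 7 →₀ ℕ) → ℕ)
    (hadd : ∀ a b, w (a + b) = w a + w b)
    (hle : ∀ d, w d ≤ sd d)
    (S : Set Mv) (hS : ∀ g ∈ S, Good1 w g) {F : Mv}
    (hF : F ∈ (Ideal.span S) ^ 2) : GoodP w F := by
  rw [pow_two] at hF
  refine Submodule.mul_induction_on hF ?_ ?_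
  · intro m hm n hn d hd
    obtain ⟨d1, d2, rfl, h1, h2⟩ := coeff_mul_split hd
    have g1 := good1_span w hadd S hS m hm d1 h1
    have g2 := good1_span w hadd S hS n hn d2 h2
    have l1 := hle d1
    have l2 := hle d2
    rw [sd_add, hadd]
    omega
  · intro x y px py d hd
    rw [MvPolynomial.coeff_add] at hd
    rcases (by by_contra hc; push_neg at hc; simp [hc.1, hc.2] at hd :
        MvPolynomial.coeff d x ≠ 0 ∨ MvPolynomial.coeff d y ≠ 0) with h | h
    · exact px d h
    · exact py d h

lemma good1_X (w : (Fin 7 →₀ ℕ) → ℕ) (i : Fin 7)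
    (hw : 1 ≤ w (Finsupp.single i 1)) : Good1 w (X i : Mv) := by
  intro d hd
  classical
  rw [MvPolynomial.coeff_X'] at hd
  have : Finsupp.single i 1 = d := by
    by_contra h; simp [h] at hd
  right
  rw [← this]
  exact hw

lemma good1_hom2 {F : Mv} (h : F.IsHomogeneous 2) (w : (Fin 7 →₀ ℕ) → ℕ) :
    Good1 w F := by
  intro d hd
  left
  rw [hom_sd h hd]

lemma Qpoly_hom (q : Fin 3 → Fin 3 → ℂ) : (Qpoly q).IsHomogeneous 2 := by
  unfold Qpoly
  apply MvPolynomial.IsHomogeneous.sum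
  intro i _
  apply MvPolynomial.IsHomogeneous.sum
  intro j _
  have : (C (q i j) * X (⟨i.1 + 4, by omega⟩ : Fin 7) *
      X (⟨j.1 + 4, by omega⟩ : Fin 7) : Mv).IsHomogeneous (0 + 1 + 1) :=
    ((MvPolynomial.isHomogeneous_C _ _).mul (MvPolynomial.isHomogeneous_X _ _)).mul
      (MvPolynomial.isHomogeneous_X _ _)
  simpa using this

lemma Q'poly_hom (q' : Fin 3 → Fin 3 → ℂ) : (Q'poly q').IsHomogeneous 2 := by
  unfold Q'poly
  apply MvPolynomial.IsHomogeneous.sum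
  intro i _
  apply MvPolynomial.IsHomogeneous.sum
  intro j _
  have : (C (q' i j) * X (⟨i.1, by omega⟩ : Fin 7) *
      X (⟨j.1, by omega⟩ : Fin 7) : Mv).IsHomogeneous (0 + 1 + 1) :=
    ((MvPolynomial.isHomogeneous_C _ _).mul (MvPolynomial.isHomogeneous_X _ _)).mul
      (MvPolynomial.isHomogeneous_X _ _)
  simpa using this

/-- weight counting x1..x4 -/
def wA (d : Fin 7 →₀ ℕ) : ℕ := d 0 + d 1 + d 2 + d 3

/-- weight counting x4..x7 -/
def wB (d : Fin 7 →₀ ℕ) : ℕ := d 3 + d 4 + d 5 + d 6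

lemma wA_add (a b : Fin 7 →₀ ℕ) : wA (a + b) = wA a + wA b := by
  simp [wA]; ring

lemma wB_add (a b : Fin 7 →₀ ℕ) : wB (a + b) = wB a + wB b := by
  simp [wB]; ring

lemma wA_le (d : Fin 7 →₀ ℕ) : wA d ≤ sd d := by
  simp [wA, sd, Fin.sum_univ_seven]; omega

lemma wB_le (d : Fin 7 →₀ ℕ) : wB d ≤ sd d := by
  simp [wB, sd, Fin.sum_univ_seven]

end DegTwoAux

open DegTwoAux

theorem degree_two_in_both_ideal_squares
    (q q' : Fin 3 → Fin 3 → ℂ) (F : MvPolynomial (Fin 7) ℂ)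
    (hF : F.IsHomogeneous 2) :
    (F ∈ (Ideal.span {X 0, X 1, X 2, X 3, Qpoly q} : Ideal (MvPolynomial (Fin 7) ℂ)) ^ 2 ∧
     F ∈ (Ideal.span {X 3, X 4, X 5, X 6, Q'poly q'} : Ideal (MvPolynomial (Fin 7) ℂ)) ^ 2)
    ↔ ∃ c : ℂ, F = C c * X 3 ^ 2 := by
  constructor
  · rintro ⟨h1, h2⟩
    have gA : GoodP wA F := by
      refine goodP_sq wA wA_add wA_le _ ?_ h1
      rintro g (rfl | rfl | rfl | rfl | rfl)
      · exact good1_X _ _ (by simp [wA, Finsupp.single_apply])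
      · exact good1_X _ _ (by simp [wA, Finsupp.single_apply])
      · exact good1_X _ _ (by simp [wA, Finsupp.single_apply])
      · exact good1_X _ _ (by simp [wA, Finsupp.single_apply])
      · exact good1_hom2 (Qpoly_hom q) wA
    have gB : GoodP wB F := by
      refine goodP_sq wB wB_add wB_le _ ?_ h2
      rintro g (rfl | rfl | rfl | rfl | rfl)
      · exact good1_X _ _ (by simp [wB, Finsupp.single_apply])
      · exact good1_X _ _ (by simp [wB, Finsupp.single_apply])
      · exact good1_X _ _ (by simp [wB, Finsupp.single_apply])
      · exact good1_X _ _ (by simp [wB, Finsupp.single_apply])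
      · exact good1_hom2 (Q'poly_hom q') wB
    refine ⟨MvPolynomial.coeff (Finsupp.single 3 2) F, ?_⟩
    apply MvPolynomial.ext
    intro d
    classical
    rw [MvPolynomial.coeff_C_mul, MvPolynomial.coeff_X_pow]
    by_cases hd : Finsupp.single (3 : Fin 7) 2 = d
    · rw [if_pos hd, hd, mul_one]
    · rw [if_neg hd, mul_zero]
      by_contra hne
      have hsd : sd d = 2 := hom_sd hF hne
      have hA := gA d hne
      have hB := gB d hne
      have hsum : d 0 + d 1 + d 2 + d 3 + d 4 + d 5 + d 6 = 2 := by
        have := hsd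
        simpa [sd, Fin.sum_univ_seven, add_assoc] using this
      simp only [wA, wB] at hA hB
      have hval : d 0 = 0 ∧ d 1 = 0 ∧ d 2 = 0 ∧ d 3 = 2 ∧ d 4 = 0 ∧ d 5 = 0 ∧ d 6 = 0 := by
        omega
      apply hd
      ext i
      fin_cases i <;> simp [Finsupp.single_apply, hval.1, hval.2.1, hval.2.2.1,
        hval.2.2.2.1, hval.2.2.2.2.1, hval.2.2.2.2.2.1, hval.2.2.2.2.2.2]
  · rintro ⟨c, rfl⟩
    have hx1 : (X 3 : MvPolynomial (Fin 7) ℂ) ∈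
        Ideal.span {X 0, X 1, X 2, X 3, Qpoly q} :=
      Ideal.subset_span (by simp)
    have hx2 : (X 3 : MvPolynomial (Fin 7) ℂ) ∈
        Ideal.span {X 3, X 4, X 5, X 6, Q'poly q'} :=
      Ideal.subset_span (by simp)
    constructor
    · refine Ideal.mul_mem_left _ _ ?_
      rw [pow_two, pow_two]
      exact Ideal.mul_mem_mul hx1 hx1
    · refine Ideal.mul_mem_left _ _ ?_
      rw [pow_two, pow_two]
      exact Ideal.mul_mem_mul hx2 hx2
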